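/- For s, t ∈ Z_k with t ≠ 0 and s ≠ t, the set Y(s,t) of nonzero vertices with coordinate sum ≡ s (mod k) and last nonzero coordinate equal to t has exactly (k^{n-1}-1)/(k-1) elements. -/

import Mathlib

/-- Two vertices of the Hamming graph `H(n,k)` are adjacent iff they differ
in exactly one coordinate. -/
def HAdj {n k : ℕ} (v w : Fin n → ZMod k) : Prop := ∃! i, v i ≠ w i

/-- `X n k s` is the set of vertices whose coordinate sum is `s` in `ZMod k`. -/
def X (n k : ℕ) (s : ZMod k) : Set (Fin n → ZMod k) := {v | ∑ i, v i = s}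

/-- `ellN v` is the (0-based) largest index at which `v` is nonzero (0 if `v = 0`). -/
def ellN {n k : ℕ} (v : Fin n → ZMod k) : ℕ :=
  (Finset.univ.filter (fun i => v i ≠ 0)).sup (fun i : Fin n => (i : ℕ))

/-- `Y n k s t` is the set of nonzero vertices with coordinate sum `s`
whose last nonzero coordinate equals `t`. -/
def Y (n k : ℕ) (s t : ZMod k) : Set (Fin n → ZMod k) :=
  {v | v ≠ 0 ∧ ∑ i, v i = s ∧ ∃ i : Fin n, (i : ℕ) = ellN v ∧ v i = t}

section Aux

variable {n k : ℕ}

lemma ellN_lt (hn : 1 ≤ n) (v : Fin n → ZMod k) : ellN v < n := by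
  unfold ellN
  rw [Finset.sup_lt_iff (by simp; omega : (⊥ : ℕ) < n)]
  exact fun i _ => i.isLt

lemma le_ellN {v : Fin n → ZMod k} {j : Fin n} (h : v j ≠ 0) : (j : ℕ) ≤ ellN v :=
  Finset.le_sup (by simp [h])

lemma ellN_eq {v : Fin n → ZMod k} {i : Fin n}
    (h1 : v i ≠ 0) (h2 : ∀ j : Fin n, (i : ℕ) < (j : ℕ) → v j = 0) : ellN v = (i : ℕ) := by
  refine le_antisymm (Finset.sup_le fun j hj => ?_) (le_ellN h1)
  simp only [Finset.mem_filter, Finset.mem_univ, true_and] at hj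
  by_contra h
  exact hj (h2 j (by omega))

/-- The "building" map: place `u` on the first `ℓ` coordinates, `t` at position `ℓ`,
zeros afterwards. -/
def build (t : ZMod k) (ℓ : Fin n) (u : Fin (ℓ : ℕ) → ZMod k) : Fin n → ZMod k :=
  fun j => if h : (j : ℕ) < (ℓ : ℕ) then u ⟨j, h⟩ else if j = ℓ then t else 0

lemma build_self (t : ZMod k) (ℓ : Fin n) (u : Fin (ℓ : ℕ) → ZMod k) :
    build t ℓ u ℓ = t := by simp [build]

lemma build_lt (t : ZMod k) (ℓ : Fin n) (u : Fin (ℓ : ℕ) → ZMod k) {j : Fin n}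
    (h : (j : ℕ) < (ℓ : ℕ)) : build t ℓ u j = u ⟨j, h⟩ := by simp [build, h]

lemma build_gt (t : ZMod k) (ℓ : Fin n) (u : Fin (ℓ : ℕ) → ZMod k) {j : Fin n}
    (h : (ℓ : ℕ) < (j : ℕ)) : build t ℓ u j = 0 := by
  have h1 : ¬ ((j : ℕ) < (ℓ : ℕ)) := by omega
  have h2 : j ≠ ℓ := by intro he; subst he; omega
  simp [build, h1, h2]

lemma ellN_build {t : ZMod k} (ht : t ≠ 0) (ℓ : Fin n) (u : Fin (ℓ : ℕ) → ZMod k) :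
    ellN (build t ℓ u) = (ℓ : ℕ) := by
  refine ellN_eq ?_ ?_
  · rw [build_self]; exact ht
  · exact fun j hj => build_gt t ℓ u hj

lemma sum_build (t : ZMod k) (ℓ : Fin n) (u : Fin (ℓ : ℕ) → ZMod k) :
    ∑ j, build t ℓ u j = (∑ i, u i) + t := by
  set f : ℕ → ZMod k :=
    fun j => if h : j < (ℓ : ℕ) then u ⟨j, h⟩ else if j = (ℓ : ℕ) then t else 0 with hf
  have hb : ∀ j : Fin n, build t ℓ u j = f (j : ℕ) := by
    intro j
    simp only [build, hf, Fin.ext_iff]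
  have h1 : ∑ j, build t ℓ u j = ∑ j ∈ Finset.range n, f j := by
    rw [← Fin.sum_univ_eq_sum_range f n]
    exact Finset.sum_congr rfl fun j _ => hb j
  have hℓn : (ℓ : ℕ) + 1 ≤ n := ℓ.isLt
  have hsplit : ∑ j ∈ Finset.Ico 0 ((ℓ : ℕ) + 1), f j + ∑ j ∈ Finset.Ico ((ℓ : ℕ) + 1) n, f j
      = ∑ j ∈ Finset.Ico 0 n, f j :=
    Finset.sum_Ico_consecutive f (Nat.zero_le _) hℓn
  have h2 : ∑ j ∈ Finset.Ico ((ℓ : ℕ) + 1) n, f j = 0 := by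
    refine Finset.sum_eq_zero fun j hj => ?_
    rw [Finset.mem_Ico] at hj
    have h3 : ¬ (j < (ℓ : ℕ)) := by omega
    have h4 : j ≠ (ℓ : ℕ) := by omega
    simp [hf, h3, h4]
  have h5 : ∑ j ∈ Finset.Ico 0 ((ℓ : ℕ) + 1), f j = (∑ i, u i) + t := by
    rw [← Finset.range_eq_Ico, Finset.sum_range_succ]
    have h6 : f (ℓ : ℕ) = t := by simp [hf]
    have h7 : ∑ j ∈ Finset.range (ℓ : ℕ), f j = ∑ i, u i := by
      rw [← Fin.sum_univ_eq_sum_range f (ℓ : ℕ)]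
      refine Finset.sum_congr rfl fun i _ => ?_
      simp [hf, i.isLt]
    rw [h6, h7]
  rw [h1, Finset.range_eq_Ico, ← hsplit, h2, h5, add_zero]

/-- The map from the sigma type into `Y`. -/
def toY (hn : 1 ≤ n) {s t : ZMod k} (ht : t ≠ 0) (hsum : True) :
    (Σ ℓ : Fin n, {u : Fin (ℓ : ℕ) → ZMod k // ∑ i, u i = s - t}) → (Y n k s t) :=
  fun p => ⟨build t p.1 p.2.1, by
    refine ⟨?_, ?_, ?_⟩
    · intro h
      apply ht
      have := build_self t p.1 p.2.1
      rw [h] at this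
      exact this.symm
    · rw [sum_build, p.2.2, sub_add_cancel]
    · exact ⟨p.1, (ellN_build ht p.1 p.2.1).symm, build_self t p.1 p.2.1⟩⟩

lemma toY_bijective (hn : 1 ≤ n) {s t : ZMod k} (ht : t ≠ 0) :
    Function.Bijective (toY hn ht trivial :
      (Σ ℓ : Fin n, {u : Fin (ℓ : ℕ) → ZMod k // ∑ i, u i = s - t}) → (Y n k s t)) := by
  constructor
  · rintro ⟨ℓ, u, hu⟩ ⟨ℓ', u', hu'⟩ h
    have hv : build t ℓ u = build t ℓ' u' := congrArg Subtype.val h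
    have hℓ : (ℓ : ℕ) = (ℓ' : ℕ) := by
      rw [← ellN_build ht ℓ u, ← ellN_build ht ℓ' u', hv]
    have hℓ2 : ℓ = ℓ' := Fin.ext hℓ
    subst hℓ2
    have hu2 : u = u' := by
      funext i
      have := congrFun hv ⟨(i : ℕ), lt_trans i.isLt ℓ.isLt⟩
      rw [build_lt t ℓ u i.isLt, build_lt t ℓ u' i.isLt] at this
      simpa using this
    subst hu2
    rfl
  · rintro ⟨v, hv0, hvs, i, hiℓ, hit⟩
    have hℓlt : ellN v < n := ellN_lt hn v
    set ℓ : Fin n := ⟨ellN v, hℓlt⟩ with hℓdef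
    have hiℓ' : i = ℓ := Fin.ext (by simp [hℓdef, hiℓ])
    set u : Fin (ℓ : ℕ) → ZMod k := fun j => v ⟨(j : ℕ), lt_trans j.isLt ℓ.isLt⟩ with hudef
    have hbv : build t ℓ u = v := by
      funext j
      rcases lt_trichotomy ((j : ℕ)) ((ℓ : ℕ)) with h | h | h
      · rw [build_lt t ℓ u h]
      · have : j = ℓ := Fin.ext h
        subst this
        rw [build_self, ← hiℓ', hit]
      · rw [build_gt t ℓ u h]
        by_contra hne
        have := le_ellN (Ne.symm hne)
        simp [hℓdef] at h
        omega
    have hsu : ∑ i, u i = s - t := by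
      have := sum_build t ℓ u
      rw [hbv, hvs] at this
      exact (eq_sub_of_add_eq this.symm)
    exact ⟨⟨ℓ, u, hsu⟩, Subtype.ext hbv⟩

lemma natCard_sigma {ι : Type*} [Fintype ι] (f : ι → Type*) [∀ i, Finite (f i)] :
    Nat.card (Σ i, f i) = ∑ i, Nat.card (f i) := by
  letI : ∀ i, Fintype (f i) := fun i => Fintype.ofFinite _
  simp [Nat.card_eq_fintype_card, Fintype.card_sigma]

/-- The fixed-sum fiber equivalence. -/
def sumSetEquiv [NeZero k] (m : ℕ) (c : ZMod k) :
    {u : Fin (m + 1) → ZMod k // ∑ i, u i = c} ≃ (Fin m → ZMod k) where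
  toFun u := Fin.init u.1
  invFun w := ⟨Fin.snoc w (c - ∑ i, w i), by
    rw [Fin.sum_univ_castSucc]
    simp⟩
  left_inv u := by
    apply Subtype.ext
    have h := u.2
    rw [Fin.sum_univ_castSucc] at h
    have hlast : u.1 (Fin.last m) = c - ∑ i, Fin.init u.1 i := by
      rw [eq_sub_iff_add_eq, add_comm]
      simpa [Fin.init] using h
    conv_rhs => rw [← Fin.snoc_init_self u.1]
    rw [hlast]
  right_inv w := by
    funext i
    simp [Fin.init]

lemma card_sumSet [NeZero k] (m : ℕ) (c : ZMod k) (hm : 1 ≤ m) :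
    Nat.card {u : Fin m → ZMod k // ∑ i, u i = c} = k ^ (m - 1) := by
  obtain ⟨m', rfl⟩ : ∃ m', m = m' + 1 := ⟨m - 1, by omega⟩
  rw [Nat.card_congr (sumSetEquiv m' c), Nat.card_fun, Nat.card_zmod]
  simp

lemma card_sumSet_zero [NeZero k] (c : ZMod k) (hc : c ≠ 0) :
    Nat.card {u : Fin 0 → ZMod k // ∑ i, u i = c} = 0 := by
  have : IsEmpty {u : Fin 0 → ZMod k // ∑ i, u i = c} := by
    constructor
    rintro ⟨u, hu⟩
    apply hc
    rw [← hu]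
    simp
  exact Nat.card_of_isEmpty

end Aux

theorem stmt7 (n k : ℕ) (hn : 1 ≤ n) (hk : 2 ≤ k) (s t : ZMod k) (ht : t ≠ 0)
    (hst : s ≠ t) : (Y n k s t).ncard = (k ^ (n - 1) - 1) / (k - 1) := by
  haveI : NeZero k := ⟨by omega⟩
  have hst' : s - t ≠ 0 := sub_ne_zero.mpr hst
  have hcard : Nat.card (Y n k s t) =
      Nat.card (Σ ℓ : Fin n, {u : Fin (ℓ : ℕ) → ZMod k // ∑ i, u i = s - t}) :=
    (Nat.card_congr (Equiv.ofBijective _ (toY_bijective hn ht))).symm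
  rw [← Nat.card_coe_set_eq, hcard, natCard_sigma]
  set g : ℕ → ℕ := fun m => if m = 0 then 0 else k ^ (m - 1) with hg
  have hterm : ∀ ℓ : Fin n, Nat.card {u : Fin (ℓ : ℕ) → ZMod k // ∑ i, u i = s - t} =
      g (ℓ : ℕ) := by
    intro ℓ
    by_cases h : (ℓ : ℕ) = 0
    · rw [hg]
      simp only [h, if_pos rfl]
      rw [h]
      exact card_sumSet_zero (s - t) hst'
    · rw [hg]
      simp only [h, if_false]
      exact card_sumSet _ _ (Nat.one_le_iff_ne_zero.mpr h)
  have h1 : ∑ ℓ : Fin n, Nat.card {u : Fin (ℓ : ℕ) → ZMod k // ∑ i, u i = s - t} =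
      ∑ ℓ : Fin n, g (ℓ : ℕ) := Finset.sum_congr rfl fun ℓ _ => hterm ℓ
  rw [h1, Fin.sum_univ_eq_sum_range g n]
  obtain ⟨m, rfl⟩ : ∃ m, n = m + 1 := ⟨n - 1, (Nat.succ_pred_eq_of_pos hn).symm⟩
  rw [Finset.sum_range_succ' g m]
  have h2 : ∀ j, g (j + 1) = k ^ j := fun j => by simp [hg]
  have h3 : g 0 = 0 := by simp [hg]
  rw [h3, add_zero, Finset.sum_congr rfl fun j _ => h2 j]
  simpa using Nat.geomSum_eq hk m
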